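/- The Heine–Borel Covering Lemma for [0,1] follows from König's Infinity Lemma restricted to binary trees: given a sequence of open intervals covering [0,1] with no finite subcover, the dyadic subintervals not covered by the first n intervals form an infinite finitely branching tree, and a path through it yields a point of [0,1] not covered by any interval, a contradiction. -/
import Mathlib

/-- Left endpoint of the dyadic interval coded by a binary string. -/
noncomputable def dyadL : List Bool → ℝ
  | [] => 0
  | b :: σ => (cond b 1 0) / 2 + dyadL σ / 2

lemma dyadL_bounds : ∀ σ : List Bool,
    0 ≤ dyadL σ ∧ dyadL σ + (2:ℝ)⁻¹ ^ σ.length ≤ 1 := by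
  intro σ
  induction σ with
  | nil => simp [dyadL]
  | cons b σ ih =>
    obtain ⟨h1, h2⟩ := ih
    constructor
    · cases b <;> simp [dyadL] <;> linarith
    · have e : dyadL (b :: σ) + (2:ℝ)⁻¹ ^ (b :: σ).length
          = (cond b 1 0) / 2 + (dyadL σ + (2:ℝ)⁻¹ ^ σ.length) / 2 := by
        simp only [dyadL, List.length_cons, pow_succ]; ring
      rw [e]
      cases b <;> simp only [cond] <;> linarith

lemma dyadL_nest : ∀ τ σ : List Bool, τ <+: σ →
    dyadL τ ≤ dyadL σ ∧
      dyadL σ + (2:ℝ)⁻¹ ^ σ.length ≤ dyadL τ + (2:ℝ)⁻¹ ^ τ.length := by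
  intro τ
  induction τ with
  | nil =>
    intro σ _
    obtain ⟨h1, h2⟩ := dyadL_bounds σ
    simp only [dyadL, List.length_nil, pow_zero]
    exact ⟨h1, by linarith⟩
  | cons b τ ih =>
    intro σ hpre
    match σ, hpre with
    | c :: σ', hpre =>
      rw [List.cons_prefix_cons] at hpre
      obtain ⟨rfl, hpre⟩ := hpre
      obtain ⟨h1, h2⟩ := ih σ' hpre
      constructor
      · simp [dyadL]; linarith
      · have e1 : dyadL (b :: σ') + (2:ℝ)⁻¹ ^ (b :: σ').length
            = (cond b 1 0) / 2 + (dyadL σ' + (2:ℝ)⁻¹ ^ σ'.length) / 2 := by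
          simp [dyadL, pow_succ]; ring
        have e2 : dyadL (b :: τ) + (2:ℝ)⁻¹ ^ (b :: τ).length
            = (cond b 1 0) / 2 + (dyadL τ + (2:ℝ)⁻¹ ^ τ.length) / 2 := by
          simp [dyadL, pow_succ]; ring
        rw [e1, e2]
        linarith

lemma dyadL_cover : ∀ (k : ℕ) (x : ℝ), 0 ≤ x → x ≤ 1 →
    ∃ σ : List Bool, σ.length = k ∧
      dyadL σ ≤ x ∧ x ≤ dyadL σ + (2:ℝ)⁻¹ ^ k := by
  intro k
  induction k with
  | zero => intro x h0 h1; exact ⟨[], by simp [dyadL], by simpa [dyadL], by simpa [dyadL]⟩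
  | succ k ih =>
    intro x h0 h1
    rcases le_total x (1/2) with hx | hx
    · obtain ⟨σ, hlen, hl, hr⟩ := ih (2 * x) (by linarith) (by linarith)
      refine ⟨false :: σ, by simp [hlen], ?_, ?_⟩
      · simp [dyadL]; linarith
      · have : dyadL (false :: σ) + (2:ℝ)⁻¹ ^ (k+1)
            = (dyadL σ + (2:ℝ)⁻¹ ^ k) / 2 := by
          simp [dyadL, pow_succ]; ring
        rw [this]; linarith
    · obtain ⟨σ, hlen, hl, hr⟩ := ih (2 * x - 1) (by linarith) (by linarith)
      refine ⟨true :: σ, by simp [hlen], ?_, ?_⟩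
      · simp [dyadL]; linarith
      · have : dyadL (true :: σ) + (2:ℝ)⁻¹ ^ (k+1)
            = (1 + dyadL σ + (2:ℝ)⁻¹ ^ k) / 2 := by
          simp [dyadL, pow_succ]; ring
        rw [this]; linarith

lemma ofFn_prefix_ofFn (f : ℕ → Bool) {k k' : ℕ} (h : k ≤ k') :
    (List.ofFn fun i : Fin k => f i) <+: (List.ofFn fun i : Fin k' => f i) := by
  induction k' with
  | zero => interval_cases k; exact List.prefix_refl _
  | succ k' ih =>
    rcases Nat.lt_or_ge k (k' + 1) with h' | h'
    · refine (ih (Nat.lt_succ_iff.mp h')).trans ?_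
      have e : (List.ofFn fun i : Fin (k'+1) => f i)
          = (List.ofFn fun i : Fin k' => f i) ++ [f k'] := by
        rw [List.ofFn_succ']
        simp [List.concat_eq_append]
      rw [e]
      exact ⟨[f k'], rfl⟩
    · have : k = k' + 1 := le_antisymm h h'
      subst this
      exact List.prefix_refl _

theorem heine_borel_of_binary_koenig
    (kl : ∀ T : Set (List Bool),
      (∀ σ ∈ T, ∀ τ : List Bool, τ <+: σ → τ ∈ T) → T.Infinite →
      ∃ f : ℕ → Bool, ∀ k : ℕ, (List.ofFn fun i : Fin k => f i) ∈ T) :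
    ∀ a b : ℕ → ℝ, Set.Icc (0 : ℝ) 1 ⊆ ⋃ n : ℕ, Set.Ioo (a n) (b n) →
      ∃ F : Finset ℕ, Set.Icc (0 : ℝ) 1 ⊆ ⋃ n ∈ F, Set.Ioo (a n) (b n) := by
  intro a b hcov
  by_contra hfin
  push_neg at hfin
  -- the tree of dyadic intervals not covered by the first `|σ|` intervals
  set T : Set (List Bool) := {σ | ∃ x : ℝ,
    dyadL σ ≤ x ∧ x ≤ dyadL σ + (2:ℝ)⁻¹ ^ σ.length ∧
      ∀ i < σ.length, x ∉ Set.Ioo (a i) (b i)} with hT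
  -- T is prefix-closed
  have hclosed : ∀ σ ∈ T, ∀ τ : List Bool, τ <+: σ → τ ∈ T := by
    rintro σ ⟨x, hx1, hx2, hx3⟩ τ hpre
    obtain ⟨h1, h2⟩ := dyadL_nest τ σ hpre
    exact ⟨x, by linarith, by linarith,
      fun i hi => hx3 i (lt_of_lt_of_le hi hpre.length_le)⟩
  -- T contains strings of every length
  have hlen : ∀ k : ℕ, ∃ σ ∈ T, σ.length = k := by
    intro k
    obtain ⟨x, hx, hxn⟩ := Set.not_subset.mp (hfin (Finset.range k))
    obtain ⟨σ, hl, h1, h2⟩ := dyadL_cover k x hx.1 hx.2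
    refine ⟨σ, ⟨x, h1, by rwa [hl], ?_⟩, hl⟩
    intro i hi hmem
    exact hxn (Set.mem_biUnion (Finset.mem_range.mpr (hl ▸ hi)) hmem)
  have hinf : T.Infinite := by
    choose g hg hglen using hlen
    exact Set.infinite_of_injective_forall_mem
      (f := g) (fun i j hij => by rw [← hglen i, ← hglen j, hij]) hg
  obtain ⟨f, hf⟩ := kl T hclosed hinf
  -- the point determined by the path
  set g : ℕ → ℝ := fun k => dyadL (List.ofFn fun i : Fin k => f i) with hgdef
  have hgb : ∀ k, g k + (2:ℝ)⁻¹ ^ k ≤ 1 := by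
    intro k
    have := (dyadL_bounds (List.ofFn fun i : Fin k => f i)).2
    simpa using this
  have hw : ∀ k : ℕ, (0:ℝ) < (2:ℝ)⁻¹ ^ k := fun k => by positivity
  have hbdd : BddAbove (Set.range g) := by
    refine ⟨1, ?_⟩
    rintro _ ⟨k, rfl⟩
    have := hgb k; have := hw k; linarith
  set x : ℝ := ⨆ k, g k with hxdef
  have hxk : ∀ k, g k ≤ x := fun k => le_ciSup hbdd k
  have hnest : ∀ {j k : ℕ}, j ≤ k →
      g j ≤ g k ∧ g k + (2:ℝ)⁻¹ ^ k ≤ g j + (2:ℝ)⁻¹ ^ j := by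
    intro j k h
    have := dyadL_nest _ _ (ofFn_prefix_ofFn f h)
    simpa using this
  have hxk' : ∀ k, x ≤ g k + (2:ℝ)⁻¹ ^ k := by
    intro k
    refine ciSup_le fun j => ?_
    rcases le_total j k with h | h
    · have := (hnest h).1; have := hw k; linarith
    · have := (hnest h).2; have := hw j; linarith
  have hx01 : x ∈ Set.Icc (0:ℝ) 1 := by
    constructor
    · have := hxk 0
      simpa [hgdef, dyadL] using this
    · refine ciSup_le fun k => ?_
      have := hgb k; have := hw k; linarith
  obtain ⟨_, ⟨n, rfl⟩, hxn⟩ := hcov hx01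
  obtain ⟨han, hbn⟩ := hxn
  -- choose k large enough
  obtain ⟨k₀, hk₀⟩ := exists_pow_lt_of_lt_one
    (lt_min (by linarith : (0:ℝ) < x - a n) (by linarith : (0:ℝ) < b n - x))
    (by norm_num : (2:ℝ)⁻¹ < 1)
  set k := max k₀ (n + 1) with hk
  have hwk : (2:ℝ)⁻¹ ^ k ≤ (2:ℝ)⁻¹ ^ k₀ :=
    pow_le_pow_of_le_one (by norm_num) (by norm_num) (le_max_left _ _)
  have hwk1 : (2:ℝ)⁻¹ ^ k < x - a n := lt_of_le_of_lt hwk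
    (lt_of_lt_of_le hk₀ (min_le_left _ _))
  have hwk2 : (2:ℝ)⁻¹ ^ k < b n - x := lt_of_le_of_lt hwk
    (lt_of_lt_of_le hk₀ (min_le_right _ _))
  obtain ⟨y, hy1, hy2, hy3⟩ := hf k
  rw [List.length_ofFn] at hy2 hy3
  have hyk := hy3 n (lt_of_lt_of_le (Nat.lt_succ_self n) (le_max_right _ _))
  apply hyk
  have h1 := hxk k
  have h2 := hxk' k
  exact ⟨by linarith, by linarith⟩
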